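/- Let G = (ℤ/2)³ act on the polynomial ring ℚ[t₀,t₁,t₂,t₃] by ℚ-algebra automorphisms, where the i-th generator (i = 1,2,3) sends tᵢ to −tᵢ and fixes the other three variables. Then the fixed subalgebra ℚ[t₀,t₁,t₂,t₃]^G equals the ℚ-subalgebra generated by t₀, t₁², t₂², and t₃². -/
import Mathlib

set_option maxRecDepth 8000
set_option maxHeartbeats 1000000

noncomputable section
open MvPolynomial

abbrev R4 : Type := MvPolynomial (Fin 4) ℚ

lemma monomial_eq_prod (d : Fin 4 →₀ ℕ) (c : ℚ) :
    (monomial d c : R4) = C c * ∏ j : Fin 4, X j ^ d j := by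
  rw [monomial_eq, Finsupp.prod_fintype]
  intro i; exact pow_zero _

lemma sigma_monomial (σ : R4 ≃ₐ[ℚ] R4) (i : Fin 4) (hi : σ (X i) = -X i)
    (hi' : ∀ j : Fin 4, j ≠ i → σ (X j) = X j) (d : Fin 4 →₀ ℕ) (c : ℚ) :
    σ (monomial d c) = monomial d ((-1) ^ (d i) * c) := by
  rw [monomial_eq_prod, monomial_eq_prod, map_mul, map_prod]
  have key : ∀ j : Fin 4, σ (X j ^ d j) = (if j = i then ((-1:R4)) ^ d j else 1) * X j ^ d j := by
    intro j
    by_cases h : j = i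
    · subst h; rw [map_pow, hi, neg_pow, if_pos rfl]
    · rw [map_pow, hi' j h, if_neg h, one_mul]
  simp only [key]
  rw [Finset.prod_mul_distrib, Finset.prod_ite_eq' Finset.univ i (fun j => ((-1:R4)) ^ d j)]
  rw [show σ (C c) = C c from σ.commutes c]
  simp only [Finset.mem_univ, if_true]
  rw [show ((-1:R4)) ^ d i = C ((-1:ℚ) ^ d i) by rw [map_pow, map_neg, map_one]]
  rw [C_mul]
  ring

lemma coeff_sigma (σ : R4 ≃ₐ[ℚ] R4) (i : Fin 4) (hi : σ (X i) = -X i)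
    (hi' : ∀ j : Fin 4, j ≠ i → σ (X j) = X j) (p : R4) (d : Fin 4 →₀ ℕ) :
    coeff d (σ p) = (-1) ^ (d i) * coeff d p := by
  have hp : σ p = ∑ e ∈ p.support, monomial e ((-1) ^ (e i) * coeff e p) := by
    conv_lhs => rw [p.as_sum]
    rw [map_sum]
    exact Finset.sum_congr rfl fun e _ => sigma_monomial σ i hi hi' e _
  rw [hp, coeff_sum]
  simp only [coeff_monomial]
  rw [Finset.sum_ite_eq' p.support d]
  by_cases h : d ∈ p.support
  · rw [if_pos h]
  · rw [if_neg h, notMem_support_iff.mp h, mul_zero]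

lemma fixed_even (σ : R4 ≃ₐ[ℚ] R4) (i : Fin 4) (hi : σ (X i) = -X i)
    (hi' : ∀ j : Fin 4, j ≠ i → σ (X j) = X j) (p : R4) (hp : σ p = p)
    (d : Fin 4 →₀ ℕ) (hd : coeff d p ≠ 0) : Even (d i) := by
  by_contra hodd
  have h := coeff_sigma σ i hi hi' p d
  rw [hp] at h
  rw [(Nat.not_even_iff_odd.mp hodd).neg_one_pow] at h
  have : coeff d p = 0 := by linarith [h]
  exact hd this

theorem invariant_ring (σ₁ σ₂ σ₃ : R4 ≃ₐ[ℚ] R4)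
    (h₁ : σ₁ (X 1) = -X 1) (h₁' : ∀ j : Fin 4, j ≠ 1 → σ₁ (X j) = X j)
    (h₂ : σ₂ (X 2) = -X 2) (h₂' : ∀ j : Fin 4, j ≠ 2 → σ₂ (X j) = X j)
    (h₃ : σ₃ (X 3) = -X 3) (h₃' : ∀ j : Fin 4, j ≠ 3 → σ₃ (X j) = X j) :
    ∀ p : R4, (σ₁ p = p ∧ σ₂ p = p ∧ σ₃ p = p) ↔
      p ∈ Algebra.adjoin ℚ ({X 0, (X 1)^2, (X 2)^2, (X 3)^2} : Set R4) := by
  intro p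
  set A := Algebra.adjoin ℚ ({X 0, (X 1)^2, (X 2)^2, (X 3)^2} : Set R4) with hA
  constructor
  · rintro ⟨f1, f2, f3⟩
    have key : ∀ d ∈ p.support, (monomial d (coeff d p) : R4) ∈ A := by
      intro d hd
      have hc := mem_support_iff.mp hd
      obtain ⟨k1, hk1⟩ := fixed_even σ₁ 1 h₁ h₁' p f1 d hc
      obtain ⟨k2, hk2⟩ := fixed_even σ₂ 2 h₂ h₂' p f2 d hc
      obtain ⟨k3, hk3⟩ := fixed_even σ₃ 3 h₃ h₃' p f3 d hc
      rw [monomial_eq_prod, Fin.prod_univ_four]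
      have mC : (C (coeff d p) : R4) ∈ A := by
        rw [show (C (coeff d p) : R4) = algebraMap ℚ R4 (coeff d p) from rfl]
        exact A.algebraMap_mem _
      have m0 : (X 0 : R4) ^ d 0 ∈ A :=
        pow_mem (Algebra.subset_adjoin (by simp)) _
      have m1 : (X 1 : R4) ^ d 1 ∈ A := by
        rw [show d 1 = 2 * k1 by omega, pow_mul]
        exact pow_mem (Algebra.subset_adjoin (by simp)) _
      have m2 : (X 2 : R4) ^ d 2 ∈ A := by
        rw [show d 2 = 2 * k2 by omega, pow_mul]
        exact pow_mem (Algebra.subset_adjoin (by simp)) _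
      have m3 : (X 3 : R4) ^ d 3 ∈ A := by
        rw [show d 3 = 2 * k3 by omega, pow_mul]
        exact pow_mem (Algebra.subset_adjoin (by simp)) _
      exact mul_mem mC (mul_mem (mul_mem (mul_mem m0 m1) m2) m3)
    have hsum : p = ∑ d ∈ p.support, (monomial d (coeff d p) : R4) := p.as_sum
    rw [hsum]
    exact Subalgebra.sum_mem A key
  · intro hp
    refine Algebra.adjoin_induction ?_ ?_ ?_ ?_ hp
    · rintro x (rfl | rfl | rfl | rfl)
      · exact ⟨h₁' 0 (by decide), h₂' 0 (by decide), h₃' 0 (by decide)⟩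
      · exact ⟨by rw [map_pow, h₁, neg_sq], by rw [map_pow, h₂' 1 (by decide)],
          by rw [map_pow, h₃' 1 (by decide)]⟩
      · exact ⟨by rw [map_pow, h₁' 2 (by decide)], by rw [map_pow, h₂, neg_sq],
          by rw [map_pow, h₃' 2 (by decide)]⟩
      · exact ⟨by rw [map_pow, h₁' 3 (by decide)], by rw [map_pow, h₂' 3 (by decide)],
          by rw [map_pow, h₃, neg_sq]⟩
    · intro r
      exact ⟨σ₁.commutes r, σ₂.commutes r, σ₃.commutes r⟩
    · rintro x y _ _ ⟨a1, a2, a3⟩ ⟨b1, b2, b3⟩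
      exact ⟨by rw [map_add, a1, b1], by rw [map_add, a2, b2], by rw [map_add, a3, b3]⟩
    · rintro x y _ _ ⟨a1, a2, a3⟩ ⟨b1, b2, b3⟩
      exact ⟨by rw [map_mul, a1, b1], by rw [map_mul, a2, b2], by rw [map_mul, a3, b3]⟩

end
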